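/- Let H be a real Hilbert space, let E : H → ℝ be Fréchet differentiable with gradient ∇E, α-strongly convex and β-smooth, and let u* ∈ H be a global minimizer of E. Then for every step size τ with 0 < τ ≤ 1/β and every u ∈ H, one has E(u − τ·∇E(u)) − E(u*) ≤ (1 − α·τ·(2 − τ·β))·(E(u) − E(u*)). -/

import Mathlib

open scoped RealInnerProductSpace

/-- Descent lemma: quadratic upper bound from a Lipschitz gradient. -/
lemma quad_upper {H : Type*} [NormedAddCommGroup H] [InnerProductSpace ℝ H] [CompleteSpace H]
    (E : H → ℝ) (E' : H → H) (β : ℝ)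
    (hgrad : ∀ x, HasGradientAt E (E' x) x)
    (hsmooth : ∀ u u' : H, ‖E' u - E' u'‖ ≤ β * ‖u - u'‖)
    (u d : H) : E (u + d) ≤ E u + ⟪E' u, d⟫ + β / 2 * ‖d‖ ^ 2 := by
  set φ : ℝ → ℝ := fun t => E (u + t • d) - t * ⟪E' u, d⟫ - β / 2 * t ^ 2 * ‖d‖ ^ 2 with hφdef
  have hφ' : ∀ t : ℝ, HasDerivAt φ
      (⟪E' (u + t • d), d⟫ - ⟪E' u, d⟫ - β * t * ‖d‖ ^ 2) t := by
    intro t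
    have hline : HasDerivAt (fun t : ℝ => u + t • d) d t := by
      simpa using ((hasDerivAt_id t).smul_const d).const_add u
    have h1 : HasDerivAt (fun t : ℝ => E (u + t • d)) ⟪E' (u + t • d), d⟫ t := by
      simpa [Function.comp_def] using ((hgrad (u + t • d)).hasFDerivAt.comp_hasDerivAt t hline)
    have h2 : HasDerivAt (fun t : ℝ => t * ⟪E' u, d⟫) ⟪E' u, d⟫ t := by
      simpa using (hasDerivAt_id t).mul_const (⟪E' u, d⟫)
    have h3 : HasDerivAt (fun t : ℝ => β / 2 * t ^ 2 * ‖d‖ ^ 2) (β * t * ‖d‖ ^ 2) t := by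
      have := (((hasDerivAt_pow 2 t).const_mul (β / 2)).mul_const (‖d‖ ^ 2))
      exact this.congr_deriv (by ring)
    exact (h1.sub h2).sub h3
  have hanti : AntitoneOn φ (Set.Icc (0 : ℝ) 1) := by
    apply antitoneOn_of_deriv_nonpos (convex_Icc 0 1)
    · exact fun t _ => ((hφ' t).continuousAt).continuousWithinAt
    · exact fun t _ => ((hφ' t).differentiableAt).differentiableWithinAt
    · intro t ht
      rw [interior_Icc] at ht
      rw [(hφ' t).deriv]
      have h4 : ⟪E' (u + t • d), d⟫ - ⟪E' u, d⟫ = ⟪E' (u + t • d) - E' u, d⟫ := by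
        rw [inner_sub_left]
      have h5 : ⟪E' (u + t • d) - E' u, d⟫ ≤ ‖E' (u + t • d) - E' u‖ * ‖d‖ :=
        real_inner_le_norm _ _
      have h6 : ‖E' (u + t • d) - E' u‖ ≤ β * (t * ‖d‖) := by
        have := hsmooth (u + t • d) u
        simpa [norm_smul, abs_of_pos ht.1] using this
      nlinarith [norm_nonneg d, mul_le_mul_of_nonneg_right h6 (norm_nonneg d)]
  have h01 := hanti (Set.mem_Icc.mpr ⟨le_refl 0, zero_le_one⟩)
      (Set.mem_Icc.mpr ⟨zero_le_one, le_refl 1⟩) zero_le_one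
  simp only [hφdef, zero_smul, add_zero, one_smul, one_pow, zero_pow, one_mul, zero_mul] at h01
  linarith

/-- energy decay of a gradient descent step for an `α`-strongly convex,
`β`-smooth energy on a real Hilbert space, with step size `0 < τ ≤ 1/β`. -/
theorem stmt0 {H : Type*} [NormedAddCommGroup H] [InnerProductSpace ℝ H] [CompleteSpace H]
    (E : H → ℝ) (E' : H → H) (α β : ℝ) (hα : 0 < α) (hβ : 0 < β)
    (hgrad : ∀ x, HasGradientAt E (E' x) x)
    (hconv : ∀ u v : H, E u + ⟪E' u, v - u⟫ + (α / 2) * ‖u - v‖ ^ 2 ≤ E v)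
    (hsmooth : ∀ u u' : H, ‖E' u - E' u'‖ ≤ β * ‖u - u'‖)
    (ustar : H) (hmin : ∀ v, E ustar ≤ E v)
    (τ : ℝ) (hτ0 : 0 < τ) (hτ : τ ≤ 1 / β) (u : H) :
    E (u - τ • E' u) - E ustar ≤ (1 - α * τ * (2 - τ * β)) * (E u - E ustar) := by
  set g := E' u with hg
  have hτβ : τ * β ≤ 1 := by
    exact (le_div_iff₀ hβ).mp hτ
  -- descent step
  have hdesc : E (u - τ • g) ≤ E u - τ * (1 - τ * β / 2) * ‖g‖ ^ 2 := by
    have h := quad_upper E E' β hgrad hsmooth u (-(τ • g))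
    have e1 : u + -(τ • g) = u - τ • g := by abel
    have e2 : ⟪g, -(τ • g)⟫ = -(τ * ‖g‖ ^ 2) := by
      rw [inner_neg_right, real_inner_smul_right, real_inner_self_eq_norm_sq]
    have e3 : ‖-(τ • g)‖ ^ 2 = τ ^ 2 * ‖g‖ ^ 2 := by
      rw [norm_neg, norm_smul, Real.norm_eq_abs, abs_of_pos hτ0, mul_pow]
    rw [e1, e2, e3] at h
    nlinarith [h]
  -- PL inequality from strong convexity
  have hPL : 2 * α * (E u - E ustar) ≤ ‖g‖ ^ 2 := by
    have h := hconv u ustar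
    have h5 : -(‖g‖ * ‖ustar - u‖) ≤ ⟪g, ustar - u⟫ := by
      have := real_inner_le_norm g (-(ustar - u))
      simp only [inner_neg_right, norm_neg] at this
      linarith
    have hnn : ‖u - ustar‖ = ‖ustar - u‖ := norm_sub_rev u ustar
    rw [hnn] at h
    nlinarith [sq_nonneg (‖g‖ - α * ‖ustar - u‖), norm_nonneg (ustar - u)]
  have hEu : 0 ≤ E u - E ustar := by linarith [hmin u]
  have hcoef : 0 ≤ τ * (2 - τ * β) := by nlinarith
  nlinarith [hdesc, hPL, mul_le_mul_of_nonneg_left hPL (mul_nonneg hτ0.le (by linarith : (0:ℝ) ≤ 2 - τ * β))]
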